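/- Let D be a finite strongly connected directed graph on vertex set V with strictly positive arc weights w, let G be the underlying simple undirected graph of D, and let π be a contraction order of G with contraction hierarchy G*π. Suppose the pair (m_u, m_d) of directed metrics respects w and fulfills the directed lower triangle inequalities: for every edge {x,y} of G*π with π⁻¹(x) < π⁻¹(y) and every lower triangle {x,y,z}, both m_u(x,y) ≤ m_d(z,x) + m_u(z,y) and m_d(x,y) ≤ m_u(z,x) + m_d(z,y) hold. Then for all vertices s and t there exists an up-down st-path in G*π whose directed length equals the shortest st-path distance in D under w. -/

import Mathlib

open SimpleGraph
open scoped ENNReal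

variable {V : Type*}

/-- One step of vertex contraction: remove `v` from the current graph and add an edge
between every pair of its current neighbors. -/
def chStep (H : SimpleGraph V) (v : V) : SimpleGraph V where
  Adj a b := a ≠ b ∧ a ≠ v ∧ b ≠ v ∧ (H.Adj a b ∨ (H.Adj v a ∧ H.Adj v b))
  symm := by
    constructor
    rintro a b ⟨h1, h2, h3, h4⟩
    refine ⟨h1.symm, h3, h2, ?_⟩
    rcases h4 with h | ⟨ha, hb⟩
    · exact Or.inl h.symm
    · exact Or.inr ⟨hb, ha⟩
  loopless := ⟨fun a h => h.1 rfl⟩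

lemma chStep_adj {H : SimpleGraph V} {v a b : V} :
    (chStep H v).Adj a b ↔ a ≠ b ∧ a ≠ v ∧ b ≠ v ∧ (H.Adj a b ∨ (H.Adj v a ∧ H.Adj v b)) :=
  Iff.rfl

/-- All edges ever present while contracting the vertices of the list in order:
the edges of the initial graph together with all added shortcuts. -/
def chList : SimpleGraph V → List V → SimpleGraph V
  | H, [] => H
  | H, v :: l => H ⊔ chList (chStep H v) l

/-- The rank of a vertex with respect to the contraction order `π`. -/
def rk {n : ℕ} (π : Fin n ≃ V) (v : V) : ℕ := (π.symm v : ℕ)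

/-- The contraction hierarchy `G*π`: contract `π 0, π 1, …` in this order and collect
all original edges and all added shortcuts. -/
def chGraph {n : ℕ} (G : SimpleGraph V) (π : Fin n ≃ V) : SimpleGraph V :=
  chList G ((List.finRange n).map ⇑π)

/-- A list of vertices is up-down w.r.t. a rank function: ranks strictly increase
along a prefix and strictly decrease along the remaining suffix, the two parts
meeting at the maximum-rank vertex. -/
def IsUpDown (r : V → ℕ) (l : List V) : Prop :=
  ∃ l₁ x l₂, l = l₁ ++ x :: l₂ ∧
    List.Chain' (fun a b => r a < r b) (l₁ ++ [x]) ∧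
    List.Chain' (fun a b => r b < r a) (x :: l₂)

/-- Reachability in the upward directed graph `G^∧π` (edges of `G*π` directed from
lower to higher rank): the vertex set of the search space `SS v`. -/
def UpReach {n : ℕ} (G : SimpleGraph V) (π : Fin n ≃ V) (v u : V) : Prop :=
  Relation.ReflTransGen (fun a b => (chGraph G π).Adj a b ∧ rk π a < rk π b) v u

/-- Length of a walk: the sum of the weights of its edges. -/
noncomputable def wlen {H : SimpleGraph V} (m : V → V → ℝ≥0∞) {s t : V}
    (p : H.Walk s t) : ℝ≥0∞ :=
  (p.darts.map (fun d => m d.toProd.1 d.toProd.2)).sum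

/-- Shortest path distance in a graph `H` under edge weights `m`. -/
noncomputable def gdist (H : SimpleGraph V) (m : V → V → ℝ≥0∞) (s t : V) : ℝ≥0∞ :=
  ⨅ (p : H.Walk s t), wlen m p

/-- Minimum length of an up-down `s`-`t` path in `G*π`. -/
noncomputable def updist {n : ℕ} (G : SimpleGraph V) (π : Fin n ≃ V)
    (m : V → V → ℝ≥0∞) (s t : V) : ℝ≥0∞ :=
  ⨅ (p : (chGraph G π).Walk s t) (_ : IsUpDown (rk π) p.support), wlen m p

/-- Minimum length of a strictly rank-increasing `u`-`v` path in `G*π`. -/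
noncomputable def upOnlyDist {n : ℕ} (G : SimpleGraph V) (π : Fin n ≃ V)
    (m : V → V → ℝ≥0∞) (u v : V) : ℝ≥0∞ :=
  ⨅ (p : (chGraph G π).Walk u v)
    (_ : List.Chain' (fun a b => rk π a < rk π b) p.support), wlen m p

/-- `S` is a balanced separator of the subgraph of `G` induced by `U`. -/
def IsBalancedSepOn [DecidableEq V] (G : SimpleGraph V) (U S : Finset V) : Prop :=
  S ⊆ U ∧ ∃ A B : Finset V, A ⊆ U ∧ B ⊆ U ∧
    Disjoint A B ∧ Disjoint A S ∧ Disjoint B S ∧ A ∪ B ∪ S = U ∧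
    (∀ a ∈ A, ∀ b ∈ B, ¬ G.Adj a b) ∧
    3 * A.card ≤ 2 * U.card ∧ 3 * B.card ≤ 2 * U.card

/-- Nested dissection orders (as lists, earliest contracted first, separator last)
of induced subgraphs of `G`, in which the separator chosen at every recursion step on
a `k`-vertex subgraph is balanced and has cardinality at most `c * k ^ α`. -/
inductive IsNDOrder [DecidableEq V] (G : SimpleGraph V) (c α : ℝ) : Finset V → List V → Prop
  | empty : IsNDOrder G c α ∅ []
  | step {U S A B : Finset V} {lA lB lS : List V} :
      Disjoint A B → Disjoint A S → Disjoint B S → A ∪ B ∪ S = U →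
      (∀ a ∈ A, ∀ b ∈ B, ¬ G.Adj a b) →
      3 * A.card ≤ 2 * U.card → 3 * B.card ≤ 2 * U.card →
      ((S.card : ℝ) ≤ c * (U.card : ℝ) ^ α) →
      lS.Nodup → lS.toFinset = S →
      IsNDOrder G c α A lA → IsNDOrder G c α B lB →
      IsNDOrder G c α U (lA ++ lB ++ lS)

/-- Number of vertices of the search space `SS v` in `G^∧π`. -/
noncomputable def nVertsSS {n : ℕ} (G : SimpleGraph V) (π : Fin n ≃ V) (v : V) : ℕ :=
  {u | UpReach G π v u}.ncard

/-- Number of arcs of the search space `SS v` in `G^∧π`: arcs of `G^∧π` with both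
endpoints reachable from `v`. -/
noncomputable def nArcsSS {n : ℕ} (G : SimpleGraph V) (π : Fin n ≃ V) (v : V) : ℕ :=
  {q : V × V | (chGraph G π).Adj q.1 q.2 ∧ rk π q.1 < rk π q.2 ∧
    UpReach G π v q.1 ∧ UpReach G π v q.2}.ncard

/-- The rank sequence of a walk: for each edge, the minimum of the ranks of its
endpoints, sorted in decreasing order. -/
def rankSeq {H : SimpleGraph V} (r : V → ℕ) {s t : V} (p : H.Walk s t) : List ℕ :=
  (p.darts.map (fun d => min (r d.toProd.1) (r d.toProd.2))).insertionSort (· ≥ ·)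

/-- Directed length of a walk in `G*π` under a pair of directed metrics `(mu, md)`:
each edge traversed from lower rank to higher rank costs its upward weight,
each edge traversed from higher rank to lower rank costs its downward weight. -/
noncomputable def dlen {H : SimpleGraph V} (r : V → ℕ) (mu md : V → V → ℝ≥0∞)
    {s t : V} (p : H.Walk s t) : ℝ≥0∞ :=
  (p.darts.map (fun d =>
    if r d.toProd.1 < r d.toProd.2 then mu d.toProd.1 d.toProd.2
    else md d.toProd.2 d.toProd.1)).sum

/-- Length of a directed walk `s :: l` under arc weights `wD`. -/
noncomputable def dWalkLen (wD : V → V → ℝ≥0∞) : V → List V → ℝ≥0∞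
  | _, [] => 0
  | s, x :: l => wD s x + dWalkLen wD x l

/-- Shortest directed path distance in the directed graph `D` under arc weights `wD`. -/
noncomputable def ddist (D : V → V → Prop) (wD : V → V → ℝ≥0∞) (s t : V) : ℝ≥0∞ :=
  ⨅ (l : List V) (_ : List.Chain D s l ∧ l.getLastD s = t), dWalkLen wD s l

-- basic chList lemmas
lemma chList_le : ∀ (l : List V) (H : SimpleGraph V), H ≤ chList H l
  | [], _ => le_rfl
  | v :: l, H => by simp only [chList]; exact le_sup_left

lemma chList_isolated : ∀ (l : List V) (H : SimpleGraph V) (z : V),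
    (∀ x, ¬ H.Adj z x) → ∀ x, ¬ (chList H l).Adj z x
  | [], H, z, hz => hz
  | v :: l, H, z, hz => by
    intro x hx
    simp only [chList, SimpleGraph.sup_adj] at hx
    rcases hx with hx | hx
    · exact hz x hx
    · refine chList_isolated l (chStep H v) z ?_ x hx
      rintro y hy
      rcases chStep_adj.mp hy with ⟨-, -, -, h | ⟨h1, -⟩⟩
      · exact hz y h
      · exact hz v h1.symm

lemma chList_triangle : ∀ (l₁ : List V) (z : V) (l₂ : List V) (H : SimpleGraph V) (a b : V),
    a ≠ b → z ∉ l₁ → a ∉ l₁ → b ∉ l₁ → a ≠ z → b ≠ z →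
    (chList H (l₁ ++ z :: l₂)).Adj z a → (chList H (l₁ ++ z :: l₂)).Adj z b →
    (chList H (l₁ ++ z :: l₂)).Adj a b
  | [], z, l₂, H, a, b, hab, _, _, _, haz, hbz, h1, h2 => by
    simp only [List.nil_append, chList, SimpleGraph.sup_adj] at h1 h2 ⊢
    have hiso : ∀ x, ¬ (chList (chStep H z) l₂).Adj z x := by
      refine chList_isolated l₂ (chStep H z) z ?_
      rintro y hy; obtain ⟨-, hzz, -, -⟩ := chStep_adj.mp hy; exact hzz rfl
    have h1' : H.Adj z a := by
      rcases h1 with h | h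
      exacts [h, absurd h (hiso a)]
    have h2' : H.Adj z b := by
      rcases h2 with h | h
      exacts [h, absurd h (hiso b)]
    refine Or.inr (chList_le l₂ (chStep H z) ?_)
    exact chStep_adj.mpr ⟨hab, haz, hbz, Or.inr ⟨h1', h2'⟩⟩
  | v :: l₁, z, l₂, H, a, b, hab, hz, ha, hb, haz, hbz, h1, h2 => by
    simp only [List.mem_cons, not_or] at hz ha hb
    simp only [List.cons_append, chList, SimpleGraph.sup_adj] at h1 h2 ⊢
    have lift : ∀ x : V, x ≠ v → H.Adj z x ∨ (chList (chStep H v) (l₁ ++ z :: l₂)).Adj z x →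
        (chList (chStep H v) (l₁ ++ z :: l₂)).Adj z x := by
      intro x hxv h
      rcases h with h | h
      · exact chList_le _ _ (chStep_adj.mpr ⟨h.ne, hz.1, hxv, Or.inl h⟩)
      · exact h
    have h1' := lift a ha.1 h1
    have h2' := lift b hb.1 h2
    exact Or.inr (chList_triangle l₁ z l₂ (chStep H v) a b hab hz.2 ha.2 hb.2 haz hbz h1' h2')

lemma rk_injective {n : ℕ} (π : Fin n ≃ V) : Function.Injective (rk π) := by
  intro a b h
  have : π.symm a = π.symm b := Fin.ext h
  exact π.symm.injective this

lemma rk_lt (v : V) {n : ℕ} (π : Fin n ≃ V) : rk π v < n := (π.symm v).isLt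

lemma rk_lt_of_mem_take {n : ℕ} (π : Fin n ≃ V) (k : ℕ) (v : V)
    (hv : v ∈ ((List.finRange n).map ⇑π).take k) : rk π v < k := by
  rw [← List.map_take] at hv
  obtain ⟨j, hj, rfl⟩ := List.mem_map.mp hv
  obtain ⟨i, hi, hget⟩ := List.getElem_of_mem hj
  have hik : i < k := lt_of_lt_of_le hi (by simp [List.length_take])
  have : ((List.finRange n).take k)[i] = (List.finRange n)[i]'(by
      simp only [List.length_take, lt_min_iff] at hi; exact hi.2) := List.getElem_take ..
  rw [this] at hget
  simp only [List.getElem_finRange] at hget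
  subst hget
  simp only [rk, Equiv.symm_apply_apply]
  simpa using hik

lemma chGraph_triangle {n : ℕ} (G : SimpleGraph V) (π : Fin n ≃ V) {a z b : V}
    (h1 : (chGraph G π).Adj z a) (h2 : (chGraph G π).Adj z b)
    (hza : rk π z < rk π a) (hzb : rk π z < rk π b) (hab : a ≠ b) :
    (chGraph G π).Adj a b := by
  set l := (List.finRange n).map ⇑π with hl
  set i := rk π z with hi
  have hil : i < l.length := by
    rw [hl, List.length_map, List.length_finRange]; exact rk_lt z π
  have hgz : l[i] = z := by
    simp only [hl, List.getElem_map, List.getElem_finRange]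
    show π ⟨i, _⟩ = z
    have : (⟨i, by simpa [hl] using hil⟩ : Fin n) = π.symm z := Fin.ext (by simp [hi, rk])
    rw [this, π.apply_symm_apply]
  have hdecomp : l = l.take i ++ z :: l.drop (i + 1) := by
    conv_lhs => rw [← List.take_append_drop i l, List.drop_eq_getElem_cons hil, hgz]
  have key : (chList G (l.take i ++ z :: l.drop (i + 1))).Adj a b := by
    refine chList_triangle _ z _ G a b hab ?_ ?_ ?_ ?_ ?_ ?_ ?_
    · intro h; exact absurd (rk_lt_of_mem_take π i z h) (by simp [hi])
    · intro h; exact absurd (rk_lt_of_mem_take π i a h) (by omega)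
    · intro h; exact absurd (rk_lt_of_mem_take π i b h) (by omega)
    · rintro rfl; exact lt_irrefl _ hza
    · rintro rfl; exact lt_irrefl _ hzb
    · rw [← hdecomp]; exact h1
    · rw [← hdecomp]; exact h2
  rw [show chGraph G π = chList G l from rfl, hdecomp]
  exact key

noncomputable def costL (r : V → ℕ) (mu md : V → V → ℝ≥0∞) (x y : V) : ℝ≥0∞ :=
  if r x < r y then mu x y else md y x

noncomputable def dlenL (r : V → ℕ) (mu md : V → V → ℝ≥0∞) : List V → ℝ≥0∞
  | [] => 0
  | [_] => 0
  | x :: y :: l => costL r mu md x y + dlenL r mu md (y :: l)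

lemma dlen_eq_dlenL {H : SimpleGraph V} (r : V → ℕ) (mu md : V → V → ℝ≥0∞) :
    ∀ {s t : V} (p : H.Walk s t), dlen r mu md p = dlenL r mu md p.support := by
  intro s t p
  induction p with
  | nil => simp [dlen, dlenL]
  | @cons s u t h p ih =>
    rw [SimpleGraph.Walk.support_cons, p.support_eq_cons]
    show dlen r mu md (SimpleGraph.Walk.cons h p) = _
    rw [show dlenL r mu md (s :: u :: p.support.tail)
        = costL r mu md s u + dlenL r mu md (u :: p.support.tail) from rfl]
    rw [← p.support_eq_cons, ← ih]
    simp [dlen, SimpleGraph.Walk.darts_cons, costL]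

lemma exists_walk_of_chain (H : SimpleGraph V) :
    ∀ (l : List V) (s t : V), List.Chain' H.Adj (s :: l) →
      (s :: l).getLast (List.cons_ne_nil _ _) = t → ∃ p : H.Walk s t, p.support = s :: l := by
  intro l
  induction l with
  | nil =>
    intro s t _ hlast
    simp only [List.getLast_singleton] at hlast
    subst hlast
    exact ⟨SimpleGraph.Walk.nil, rfl⟩
  | cons x l ih =>
    intro s t hch hlast
    change List.IsChain H.Adj (s :: x :: l) at hch
    rw [List.isChain_cons_cons] at hch
    have hlast' : (x :: l).getLast (List.cons_ne_nil _ _) = t := by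
      rw [← hlast]; exact (List.getLast_cons (List.cons_ne_nil _ _)).symm
    obtain ⟨p, hp⟩ := ih x t hch.2 hlast'
    exact ⟨SimpleGraph.Walk.cons hch.1 p, by simp [hp]⟩

lemma dlenL_append (r : V → ℕ) (mu md : V → V → ℝ≥0∞) :
    ∀ (l₁ : List V) (a : V) (l₂ : List V),
      dlenL r mu md (l₁ ++ a :: l₂) = dlenL r mu md (l₁ ++ [a]) + dlenL r mu md (a :: l₂)
  | [], a, l₂ => by simp [dlenL]
  | [x], a, l₂ => by simp [dlenL]
  | x :: y :: l₁, a, l₂ => by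
    have ih := dlenL_append r mu md (y :: l₁) a l₂
    simp only [List.cons_append] at ih ⊢
    rw [show dlenL r mu md (x :: y :: (l₁ ++ a :: l₂))
        = costL r mu md x y + dlenL r mu md (y :: (l₁ ++ a :: l₂)) from rfl]
    rw [show dlenL r mu md (x :: y :: (l₁ ++ [a]))
        = costL r mu md x y + dlenL r mu md (y :: (l₁ ++ [a])) from rfl]
    rw [ih, add_assoc]

lemma desc_of_no_min (r : V → ℕ) :
    ∀ (l : List V) (s y : V), r y < r s →
      List.Chain' (fun a b => r a ≠ r b) (s :: y :: l) →
      (∀ l₁ a z b l₂, s :: y :: l = l₁ ++ a :: z :: b :: l₂ → ¬(r z < r a ∧ r z < r b)) →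
      List.Chain' (fun a b => r b < r a) (s :: y :: l) := by
  intro l
  induction l with
  | nil =>
    intro s y hys _ _
    exact List.isChain_cons_cons.mpr ⟨hys, List.isChain_singleton _⟩
  | cons w l ih =>
    intro s y hys hch hmin
    have hne : r y ≠ r w := (List.isChain_cons_cons.mp (List.isChain_cons_cons.mp hch).2).1
    have hyw : r w < r y := by
      have h1 := hmin [] s y w l rfl
      rcases lt_or_gt_of_ne hne with h | h
      · exact absurd ⟨hys, h⟩ h1
      · exact h
    have hrec := ih y w hyw (List.isChain_cons_cons.mp hch).2
      (fun l₁ a z b l₂ h => hmin (s :: l₁) a z b l₂ (by rw [List.cons_append, ← h]))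
    exact List.isChain_cons_cons.mpr ⟨hys, hrec⟩

lemma updown_of_no_min (r : V → ℕ) :
    ∀ (l : List V) (s : V),
      List.Chain' (fun a b => r a ≠ r b) (s :: l) →
      (∀ l₁ a z b l₂, s :: l = l₁ ++ a :: z :: b :: l₂ → ¬(r z < r a ∧ r z < r b)) →
      IsUpDown r (s :: l) := by
  intro l
  induction l with
  | nil =>
    intro s _ _
    exact ⟨[], s, [], rfl, List.isChain_singleton _, List.isChain_singleton _⟩
  | cons y l ih =>
    intro s hch hmin
    have hne : r s ≠ r y := (List.isChain_cons_cons.mp hch).1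
    rcases lt_or_gt_of_ne hne with hsy | hys
    · obtain ⟨l₁, x, l₂, heq, hup, hdn⟩ := ih y (List.isChain_cons_cons.mp hch).2
        (fun l₁ a z b l₂ h => hmin (s :: l₁) a z b l₂ (by rw [List.cons_append, ← h]))
      cases l₁ with
      | nil =>
        simp only [List.nil_append] at heq
        have hyx : y = x := (List.cons.injEq _ _ _ _).mp heq |>.1
        refine ⟨[s], x, l₂, by simp [heq], ?_, hdn⟩
        exact List.isChain_cons_cons.mpr ⟨hyx ▸ hsy, List.isChain_singleton _⟩
      | cons c l₁' =>
        simp only [List.cons_append] at heq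
        have hc : c = y := ((List.cons.injEq _ _ _ _).mp heq).1.symm
        refine ⟨s :: c :: l₁', x, l₂, by simp [heq], ?_, hdn⟩
        simp only [List.cons_append] at hup ⊢
        exact List.isChain_cons_cons.mpr ⟨hc ▸ hsy, hup⟩
    · exact ⟨[], s, y :: l, rfl, List.isChain_singleton _, desc_of_no_min r l s y hys hch hmin⟩

lemma getLast?_append_cons (u : List V) (a : V) (l : List V) :
    (u ++ a :: l).getLast? = (a :: l).getLast? := by
  rw [List.getLast?_append]
  rw [List.getLast?_eq_getLast (List.cons_ne_nil a l)]
  rfl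

lemma updown_reduce (H : SimpleGraph V) (r : V → ℕ) (mu md : V → V → ℝ≥0∞)
    (hr : Function.Injective r)
    (htri : ∀ a z b, H.Adj a z → H.Adj z b → r z < r a → r z < r b → a ≠ b → H.Adj a b)
    (hcost : ∀ a z b, H.Adj a z → H.Adj z b → H.Adj a b → r z < r a → r z < r b →
      costL r mu md a b ≤ costL r mu md a z + costL r mu md z b) :
    ∀ (N : ℕ) (l : List V), l ≠ [] → l.length ≤ N → List.Chain' H.Adj l →
      ∃ l', l' ≠ [] ∧ List.Chain' H.Adj l' ∧ l'.head? = l.head? ∧ l'.getLast? = l.getLast? ∧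
        IsUpDown r l' ∧ dlenL r mu md l' ≤ dlenL r mu md l := by
  intro N
  induction N with
  | zero =>
    intro l hne hlen
    exact absurd (List.eq_nil_of_length_eq_zero (Nat.le_zero.mp hlen)) hne
  | succ N ih =>
    intro l hne hlen hch
    by_cases hmin : ∃ l₁ a z b l₂, l = l₁ ++ a :: z :: b :: l₂ ∧ r z < r a ∧ r z < r b
    · obtain ⟨l₁, a, z, b, l₂, hdecomp, hza, hzb⟩ := hmin
      subst hdecomp
      change List.IsChain H.Adj (l₁ ++ a :: z :: b :: l₂) at hch
      rw [List.isChain_append] at hch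
      obtain ⟨hc1, hc2, hlink⟩ := hch
      have haz : H.Adj a z := (List.isChain_cons_cons.mp hc2).1
      have hzb' : H.Adj z b := (List.isChain_cons_cons.mp (List.isChain_cons_cons.mp hc2).2).1
      have hcb : List.Chain' H.Adj (b :: l₂) :=
        (List.isChain_cons_cons.mp (List.isChain_cons_cons.mp hc2).2).2
      have hold : dlenL r mu md (l₁ ++ a :: z :: b :: l₂)
          = dlenL r mu md (l₁ ++ [a]) +
            (costL r mu md a z + (costL r mu md z b + dlenL r mu md (b :: l₂))) := by
        rw [dlenL_append r mu md l₁ a (z :: b :: l₂)]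
        rfl
      obtain ⟨l'', hne'', hch'', hhd'', hlast'', hud'', hlen''⟩ :
          ∃ l', l' ≠ [] ∧ List.Chain' H.Adj l' ∧
            l'.head? = (l₁ ++ a :: z :: b :: l₂).head? ∧
            l'.getLast? = (l₁ ++ a :: z :: b :: l₂).getLast? ∧
            IsUpDown r l' ∧ dlenL r mu md l' ≤ dlenL r mu md (l₁ ++ a :: z :: b :: l₂) := by
        by_cases hab : a = b
        · -- drop the detour entirely
          subst hab
          have hch' : List.Chain' H.Adj (l₁ ++ a :: l₂) := by
            show List.IsChain H.Adj _
            rw [List.isChain_append]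
            refine ⟨hc1, hcb, ?_⟩
            intro x hx y hy
            exact hlink x hx y (by simpa using hy)
          have hlen' : (l₁ ++ a :: l₂).length ≤ N := by
            simp only [List.length_append, List.length_cons] at hlen ⊢
            omega
          obtain ⟨l', h1, h2, h3, h4, h5, h6⟩ :=
            ih (l₁ ++ a :: l₂) (by simp) hlen' hch'
          refine ⟨l', h1, h2, ?_, ?_, h5, ?_⟩
          · rw [h3]; simp [List.head?_append]
          · rw [h4, getLast?_append_cons, getLast?_append_cons l₁ a (z :: a :: l₂),
              show (a :: z :: a :: l₂) = [a, z] ++ a :: l₂ from rfl,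
              getLast?_append_cons [a, z] a l₂]
          · refine le_trans h6 ?_
            rw [hold, dlenL_append r mu md l₁ a l₂]
            refine add_le_add_right ?_ _
            exact le_trans (self_le_add_left _ _) (self_le_add_left _ _)
        · -- shortcut the detour
          have hAB : H.Adj a b := htri a z b haz hzb' hza hzb hab
          have hch' : List.Chain' H.Adj (l₁ ++ a :: b :: l₂) := by
            show List.IsChain H.Adj _
            rw [List.isChain_append]
            refine ⟨hc1, List.isChain_cons_cons.mpr ⟨hAB, hcb⟩, ?_⟩
            intro x hx y hy
            exact hlink x hx y (by simpa using hy)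
          have hlen' : (l₁ ++ a :: b :: l₂).length ≤ N := by
            simp only [List.length_append, List.length_cons] at hlen ⊢
            omega
          obtain ⟨l', h1, h2, h3, h4, h5, h6⟩ :=
            ih (l₁ ++ a :: b :: l₂) (by simp) hlen' hch'
          refine ⟨l', h1, h2, ?_, ?_, h5, ?_⟩
          · rw [h3]; simp [List.head?_append]
          · rw [h4, getLast?_append_cons l₁ a (b :: l₂),
              getLast?_append_cons l₁ a (z :: b :: l₂),
              show (a :: b :: l₂) = [a] ++ b :: l₂ from rfl,
              show (a :: z :: b :: l₂) = [a, z] ++ b :: l₂ from rfl,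
              getLast?_append_cons [a] b l₂, getLast?_append_cons [a, z] b l₂]
          · refine le_trans h6 ?_
            rw [hold, dlenL_append r mu md l₁ a (b :: l₂)]
            refine add_le_add_right ?_ _
            rw [show dlenL r mu md (a :: b :: l₂)
                = costL r mu md a b + dlenL r mu md (b :: l₂) from rfl, ← add_assoc]
            exact add_le_add_left (hcost a z b haz hzb' hAB hza hzb) _
      exact ⟨l'', hne'', hch'', hhd'', hlast'', hud'', hlen''⟩
    · push_neg at hmin
      obtain ⟨s, l0, rfl⟩ : ∃ s l0, l = s :: l0 := by
        cases l with
        | nil => exact absurd rfl hne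
        | cons s l0 => exact ⟨s, l0, rfl⟩
      have hnec : List.Chain' (fun x y => r x ≠ r y) (s :: l0) :=
        hch.imp (fun a b h => hr.ne h.ne)
      refine ⟨s :: l0, hne, hch, rfl, rfl, ?_, le_rfl⟩
      refine updown_of_no_min r l0 s hnec ?_
      intro l₁ a z b l₂ h hzab
      exact absurd hzab.2 (not_lt.mpr (hmin l₁ a z b l₂ h hzab.1))

lemma chain_rk_length_le {n : ℕ} (π : Fin n ≃ V) (l : List V)
    (h : List.Chain' (fun a b => rk π a < rk π b) l) : l.length ≤ n := by
  have h2 : List.Chain' (· < ·) (l.map (rk π)) :=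
    (List.isChain_map (rk π)).mpr h
  have hp : (l.map (rk π)).Pairwise (· < ·) := List.isChain_iff_pairwise.mp h2
  have hnd : (l.map (rk π)).Nodup := hp.imp Nat.ne_of_lt
  have hsub : (l.map (rk π)).toFinset ⊆ Finset.range n := by
    intro m hm
    rw [List.mem_toFinset] at hm
    obtain ⟨v, _, rfl⟩ := List.mem_map.mp hm
    exact Finset.mem_range.mpr (rk_lt v π)
  calc l.length = (l.map (rk π)).length := (List.length_map _).symm
    _ = (l.map (rk π)).toFinset.card := (List.toFinset_card_of_nodup hnd).symm
    _ ≤ n := by simpa using Finset.card_le_card hsub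

lemma chain_rk_length_le' {n : ℕ} (π : Fin n ≃ V) (l : List V)
    (h : List.Chain' (fun a b => rk π b < rk π a) l) : l.length ≤ n := by
  have : List.Chain' (fun a b => rk π a < rk π b) l.reverse := by
    show List.IsChain _ l.reverse
    rw [List.isChain_reverse]
    exact h
  simpa using chain_rk_length_le π l.reverse this

lemma updown_length_le {n : ℕ} (π : Fin n ≃ V) (l : List V) (h : IsUpDown (rk π) l) :
    l.length ≤ 2 * n := by
  obtain ⟨l₁, x, l₂, rfl, hup, hdn⟩ := h
  have h1 := chain_rk_length_le π (l₁ ++ [x]) hup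
  have h2 := chain_rk_length_le' π (x :: l₂) hdn
  simp only [List.length_append, List.length_cons, List.length_singleton] at h1 h2 ⊢
  omega

lemma walk_of_dchain (D : V → V → Prop) (G : SimpleGraph V)
    (hGD : ∀ a b, G.Adj a b ↔ a ≠ b ∧ (D a b ∨ D b a)) :
    ∀ (l : List V) (s : V), List.Chain D s l → Nonempty (G.Walk s (l.getLastD s)) := by
  intro l
  induction l with
  | nil => intro s _; exact ⟨SimpleGraph.Walk.nil⟩
  | cons x l ih =>
    intro s hch
    replace hch : D s x ∧ List.Chain D x l := List.isChain_cons_cons.mp hch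
    obtain ⟨p⟩ := ih x hch.2
    rw [List.getLastD_cons]
    by_cases hsx : s = x
    · subst hsx; exact ⟨p⟩
    · exact ⟨SimpleGraph.Walk.cons ((hGD s x).mpr ⟨hsx, Or.inl hch.1⟩) p⟩

lemma walk_updown {n : ℕ} (G : SimpleGraph V) (π : Fin n ≃ V) (mu md : V → V → ℝ≥0∞)
    (hcost : ∀ a z b, (chGraph G π).Adj a z → (chGraph G π).Adj z b → (chGraph G π).Adj a b →
      rk π z < rk π a → rk π z < rk π b →
      costL (rk π) mu md a b ≤ costL (rk π) mu md a z + costL (rk π) mu md z b)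
    {s t : V} (p : (chGraph G π).Walk s t) :
    ∃ q : (chGraph G π).Walk s t, IsUpDown (rk π) q.support ∧
      dlen (rk π) mu md q ≤ dlen (rk π) mu md p := by
  have htri : ∀ a z b, (chGraph G π).Adj a z → (chGraph G π).Adj z b →
      rk π z < rk π a → rk π z < rk π b → a ≠ b → (chGraph G π).Adj a b :=
    fun a z b haz hzb h1 h2 hab => chGraph_triangle G π haz.symm hzb h1 h2 hab
  obtain ⟨l', hne', hch', hhd', hlast', hud', hlen'⟩ :=
    updown_reduce (chGraph G π) (rk π) mu md (rk_injective π) htri hcost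
      p.support.length p.support p.support_ne_nil le_rfl p.isChain_adj_support
  obtain ⟨a, tl, rfl⟩ : ∃ a tl, l' = a :: tl := by
    cases l' with
    | nil => exact absurd rfl hne'
    | cons a tl => exact ⟨a, tl, rfl⟩
  have has : a = s := by
    rw [p.support_eq_cons] at hhd'
    exact Option.some.inj hhd'
  subst has
  have hlt : (a :: tl).getLast (List.cons_ne_nil _ _) = t := by
    rw [List.getLast?_eq_getLast (List.cons_ne_nil a tl),
      List.getLast?_eq_getLast p.support_ne_nil] at hlast'
    rw [Option.some.inj hlast']
    exact p.getLast_support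
  obtain ⟨q, hq⟩ := exists_walk_of_chain (chGraph G π) tl a t hch' hlt
  refine ⟨q, hq ▸ hud', ?_⟩
  rw [dlen_eq_dlenL, dlen_eq_dlenL, hq]
  exact hlen'


/-- Directed version. If the pair `(m_u, m_d)` of directed metrics
respects the arc weights `w` of the strongly connected directed graph `D` and
fulfills the directed lower triangle inequalities, then for all `s`, `t` there is an
up-down `s`-`t` path in `G*π` whose directed length equals the shortest `s`-`t`
distance in `D`. -/
theorem stmt15 {V : Type*} [Fintype V] {n : ℕ}
    (D : V → V → Prop) (wD : V → V → ℝ≥0∞)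
    (hwD_pos : ∀ a b, D a b → 0 < wD a b ∧ wD a b < ⊤)
    (hsc : ∀ s t : V, ∃ l : List V, List.Chain D s l ∧ l.getLastD s = t)
    (G : SimpleGraph V) (hGD : ∀ a b, G.Adj a b ↔ a ≠ b ∧ (D a b ∨ D b a))
    (π : Fin n ≃ V) (mu md : V → V → ℝ≥0∞)
    (hm_pos : ∀ x y, (chGraph G π).Adj x y → rk π x < rk π y →
      0 < mu x y ∧ 0 < md x y)
    (hresp : ∀ s t, (⨅ p : (chGraph G π).Walk s t, dlen (rk π) mu md p) = ddist D wD s t)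
    (hlt : ∀ x y z, (chGraph G π).Adj x y → (chGraph G π).Adj z x →
      (chGraph G π).Adj z y → rk π x < rk π y → rk π z < rk π x →
      mu x y ≤ md z x + mu z y ∧ md x y ≤ mu z x + md z y) :
    ∀ s t : V, ∃ p : (chGraph G π).Walk s t,
      IsUpDown (rk π) p.support ∧ dlen (rk π) mu md p = ddist D wD s t := by
  classical
  intro s t
  set H := chGraph G π with hH
  set r := rk π with hr
  -- derived cost inequality
  have hcost : ∀ a z b, H.Adj a z → H.Adj z b → H.Adj a b →
      r z < r a → r z < r b →
      costL r mu md a b ≤ costL r mu md a z + costL r mu md z b := by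
    intro a z b haz hzb hab h1 h2
    have hAZ : costL r mu md a z = md z a := if_neg (by omega)
    have hZB : costL r mu md z b = mu z b := if_pos h2
    rw [hAZ, hZB]
    have hne : r a ≠ r b := fun h => hab.ne (rk_injective π h)
    rcases lt_or_gt_of_ne hne with h3 | h3
    · rw [show costL r mu md a b = mu a b from if_pos h3]
      exact (hlt a b z hab haz.symm hzb h3 h1).1
    · rw [show costL r mu md a b = md b a from if_neg (by omega)]
      have := (hlt b a z hab.symm hzb haz.symm h3 h2).2
      rw [add_comm]
      exact this
  -- an initial walk from s to t in the hierarchy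
  have hp0 : Nonempty (H.Walk s t) := by
    obtain ⟨l0, hch0, hlast0⟩ := hsc s t
    obtain ⟨p0⟩ := walk_of_dchain D G hGD l0 s hch0
    rw [hlast0] at p0
    exact ⟨p0.mapLe (chList_le _ _)⟩
  obtain ⟨p0⟩ := hp0
  obtain ⟨q0, hq0ud, _⟩ := walk_updown G π mu md hcost p0
  -- the finite set of candidate up-down walks
  letI : H.LocallyFinite := fun v => Fintype.ofFinite _
  let F : Finset (H.Walk s t) :=
    (Finset.range (2 * n + 1)).biUnion (fun k => H.finsetWalkLength k s t)
  have hFmem : ∀ q : H.Walk s t, IsUpDown r q.support → q ∈ F := by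
    intro q hq
    have h1 : q.support.length ≤ 2 * n := updown_length_le π q.support hq
    rw [SimpleGraph.Walk.length_support] at h1
    exact Finset.mem_biUnion.mpr ⟨q.length, Finset.mem_range.mpr (by omega),
      SimpleGraph.mem_finsetWalkLength_iff.mpr rfl⟩
  let F' : Finset (H.Walk s t) := F.filter (fun q => IsUpDown r q.support)
  have hq0F : q0 ∈ F' := Finset.mem_filter.mpr ⟨hFmem q0 hq0ud, hq0ud⟩
  obtain ⟨qm, hqmF, hqmmin⟩ :=
    F'.exists_min_image (dlen r mu md) ⟨q0, hq0F⟩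
  have hqmud : IsUpDown r qm.support := (Finset.mem_filter.mp hqmF).2
  have hkey : dlen r mu md qm = ⨅ p : H.Walk s t, dlen r mu md p := by
    refine le_antisymm (le_iInf ?_) (iInf_le _ qm)
    intro p
    obtain ⟨q, hqud, hqle⟩ := walk_updown G π mu md hcost p
    exact le_trans (hqmmin q (Finset.mem_filter.mpr ⟨hFmem q hqud, hqud⟩)) hqle
  exact ⟨qm, hqmud, hkey.trans (hresp s t)⟩
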